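/- Every body of constant width in ℍ^d is strictly convex; that is, if W ⊂ ℍ^d is a convex body such that width_H(W) = δ for every supporting hyperplane H, then every supporting hyperplane of W meets W in exactly one point. -/

import Mathlib

noncomputable section

namespace HypSpace

/-- Inverse hyperbolic cosine. -/
def arcosh (x : ℝ) : ℝ := Real.log (x + Real.sqrt (x ^ 2 - 1))

/-- The Minkowski bilinear form on `ℝ^{d+1}` (signature `(d,1)`, the last
coordinate being timelike). -/
def mink (d : ℕ) (x y : EuclideanSpace ℝ (Fin (d + 1))) : ℝ :=
  (∑ i : Fin d, x i.castSucc * y i.castSucc) - x (Fin.last d) * y (Fin.last d)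

/-- The hyperboloid model of `d`-dimensional hyperbolic space: the upper sheet
of the two-sheeted hyperboloid `mink x x = -1`. -/
def Pt (d : ℕ) : Type := {x : EuclideanSpace ℝ (Fin (d + 1)) // mink d x x = -1 ∧ 0 < x (Fin.last d)}

variable {d : ℕ}

/-- Hyperbolic distance between two points of `ℍ^d`. -/
def hdist (p q : Pt d) : ℝ := arcosh (-(mink d p.1 q.1))


/-! helper lemmas -/

section Helpers

lemma mink_comm (x y : EuclideanSpace ℝ (Fin (d+1))) : mink d x y = mink d y x := by
  simp only [mink]
  congr 1
  · exact Finset.sum_congr rfl fun i _ => by ring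
  · ring

lemma mink_smul_left (c : ℝ) (x y : EuclideanSpace ℝ (Fin (d+1))) :
    mink d (c • x) y = c * mink d x y := by
  simp only [mink, PiLp.smul_apply, smul_eq_mul, mul_sub, Finset.mul_sum]
  congr 1
  · exact Finset.sum_congr rfl fun i _ => by ring
  · ring

lemma mink_add_left (x y z : EuclideanSpace ℝ (Fin (d+1))) :
    mink d (x + y) z = mink d x z + mink d y z := by
  simp only [mink, PiLp.add_apply]
  have h : (∑ i : Fin d, (x i.castSucc + y i.castSucc) * z i.castSucc)
      = ∑ i : Fin d, (x i.castSucc * z i.castSucc + y i.castSucc * z i.castSucc) :=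
    Finset.sum_congr rfl fun i _ => by ring
  rw [h, Finset.sum_add_distrib]
  ring

lemma mink_sub_left (x y z : EuclideanSpace ℝ (Fin (d+1))) :
    mink d (x - y) z = mink d x z - mink d y z := by
  have : x - y + y = x := by abel
  have h := mink_add_left (x - y) y z
  rw [this] at h
  linarith

lemma mink_smul_right (c : ℝ) (x y : EuclideanSpace ℝ (Fin (d+1))) :
    mink d x (c • y) = c * mink d x y := by
  rw [mink_comm, mink_smul_left, mink_comm]

lemma mink_add_right (x y z : EuclideanSpace ℝ (Fin (d+1))) :
    mink d x (y + z) = mink d x y + mink d x z := by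
  rw [mink_comm, mink_add_left, mink_comm y x, mink_comm z x]

lemma mink_sub_right (x y z : EuclideanSpace ℝ (Fin (d+1))) :
    mink d x (y - z) = mink d x y - mink d x z := by
  rw [mink_comm, mink_sub_left, mink_comm y x, mink_comm z x]

/-! arcosh lemmas -/

lemma arcosh_one : arcosh 1 = 0 := by
  simp [arcosh]

lemma arg_pos {x : ℝ} (hx : 1 ≤ x) : (0:ℝ) < x + Real.sqrt (x^2-1) := by
  have := Real.sqrt_nonneg (x^2-1); linarith

lemma arcosh_le_arcosh {x y : ℝ} (hx : 1 ≤ x) (hxy : x ≤ y) : arcosh x ≤ arcosh y := by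
  have h1 : Real.sqrt (x^2-1) ≤ Real.sqrt (y^2-1) := by
    apply Real.sqrt_le_sqrt; nlinarith
  have := arg_pos hx
  have hy := arg_pos (hx.trans hxy)
  exact (Real.log_le_log_iff this hy).2 (by linarith)

lemma arcosh_lt_arcosh {x y : ℝ} (hx : 1 ≤ x) (hxy : x < y) : arcosh x < arcosh y := by
  have h1 : Real.sqrt (x^2-1) ≤ Real.sqrt (y^2-1) := by
    apply Real.sqrt_le_sqrt; nlinarith
  exact Real.log_lt_log (arg_pos hx) (by linarith)

lemma arcosh_nonneg {x : ℝ} (hx : 1 ≤ x) : 0 ≤ arcosh x := by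
  have := arcosh_le_arcosh le_rfl hx
  rwa [arcosh_one] at this

lemma le_of_arcosh_le_arcosh {x y : ℝ} (hx : 1 ≤ x) (hy : 1 ≤ y)
    (h : arcosh x ≤ arcosh y) : x ≤ y := by
  by_contra hc
  exact absurd h (not_le.2 (arcosh_lt_arcosh hy (not_le.1 hc)))

lemma eq_of_arcosh_eq_arcosh {x y : ℝ} (hx : 1 ≤ x) (hy : 1 ≤ y)
    (h : arcosh x = arcosh y) : x = y :=
  le_antisymm (le_of_arcosh_le_arcosh hx hy h.le) (le_of_arcosh_le_arcosh hy hx h.ge)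

lemma le_exp_of_arcosh_le {x R : ℝ} (hx : 1 ≤ x) (h : arcosh x ≤ R) : x ≤ Real.exp R := by
  have hx0 : (0:ℝ) < x := by linarith
  have : Real.log x ≤ arcosh x := by
    apply (Real.log_le_log_iff hx0 (arg_pos hx)).2
    have := Real.sqrt_nonneg (x^2-1); linarith
  exact (Real.log_le_iff_le_exp hx0).1 (this.trans h)

lemma arcosh_cosh {y : ℝ} (hy : 0 ≤ y) : arcosh (Real.cosh y) = y := by
  unfold arcosh
  have h1 : Real.cosh y ^ 2 - 1 = Real.sinh y ^ 2 := by
    have := Real.cosh_sq y; linarith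
  have h2 : 0 ≤ Real.sinh y := by
    rw [← Real.sinh_zero]; exact Real.sinh_le_sinh.2 hy
  rw [h1, Real.sqrt_sq h2, Real.cosh_add_sinh, Real.log_exp]

lemma two_arcosh_sqrt {C : ℝ} (hC : 1 ≤ C) :
    2 * arcosh (Real.sqrt ((C+1)/2)) = arcosh C := by
  set c := Real.sqrt ((C+1)/2) with hc
  have hc2 : c^2 = (C+1)/2 := Real.sq_sqrt (by linarith)
  have hc1 : 1 ≤ c := by
    rw [show (1:ℝ) = Real.sqrt 1 by simp [Real.sqrt_one], hc]
    apply Real.sqrt_le_sqrt; linarith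
  have hs : Real.sqrt (c^2-1) = Real.sqrt ((C-1)/2) := by rw [hc2]; congr 1; ring
  have hprod : c * Real.sqrt ((C-1)/2) = Real.sqrt (C^2-1) / 2 := by
    rw [hc, ← Real.sqrt_mul (by linarith)]
    rw [show (C+1)/2 * ((C-1)/2) = (C^2-1)/4 by ring]
    rw [show (C^2-1)/4 = (C^2-1) * (1/4) by ring, Real.sqrt_mul (by nlinarith)]
    rw [show (1:ℝ)/4 = (1/2)^2 by norm_num, Real.sqrt_sq (by norm_num)]
    ring
  unfold arcosh
  rw [hs]
  rw [show (2:ℝ) * Real.log (c + Real.sqrt ((C-1)/2))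
      = Real.log ((c + Real.sqrt ((C-1)/2))^2) by
    rw [Real.log_pow]; push_cast; ring]
  congr 1
  set s := Real.sqrt ((C-1)/2) with hsdef
  have hss : s^2 = (C-1)/2 := Real.sq_sqrt (by linarith)
  have hsq : (c + s)^2 = c^2 + s^2 + 2*(c*s) := by ring
  rw [hsq, hc2, hss, hprod]
  ring

end Helpers

section PtLemmas

lemma pt_last_pos (p : Pt d) : 0 < p.1 (Fin.last d) := p.2.2

lemma pt_sum_sq (p : Pt d) :
    ∑ i : Fin d, (p.1 i.castSucc)^2 = (p.1 (Fin.last d))^2 - 1 := by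
  have h := p.2.1
  unfold mink at h
  have : ∑ i : Fin d, p.1 i.castSucc * p.1 i.castSucc = ∑ i : Fin d, (p.1 i.castSucc)^2 :=
    Finset.sum_congr rfl fun i _ => by ring
  rw [this] at h
  nlinarith [h]

lemma pt_last_ge_one (p : Pt d) : 1 ≤ p.1 (Fin.last d) := by
  have h := pt_sum_sq p
  have h2 : 0 ≤ ∑ i : Fin d, (p.1 i.castSucc)^2 :=
    Finset.sum_nonneg fun i _ => sq_nonneg _
  nlinarith [pt_last_pos p]

/-- Cauchy–Schwarz for the spatial part. -/
lemma spatial_cs (x y : EuclideanSpace ℝ (Fin (d+1))) :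
    (∑ i : Fin d, x i.castSucc * y i.castSucc)^2
      ≤ (∑ i : Fin d, (x i.castSucc)^2) * (∑ i : Fin d, (y i.castSucc)^2) := by
  exact Finset.sum_mul_sq_le_sq_mul_sq Finset.univ
    (fun i : Fin d => x i.castSucc) (fun i : Fin d => y i.castSucc)

/-- Reverse Cauchy–Schwarz: for points on the hyperboloid, `-mink p q ≥ 1`. -/
lemma minkRC (p q : Pt d) : 1 ≤ -(mink d p.1 q.1) := by
  set A := ∑ i : Fin d, p.1 i.castSucc * q.1 i.castSucc with hA
  have hcs : A^2 ≤ ((p.1 (Fin.last d))^2 - 1) * ((q.1 (Fin.last d))^2 - 1) := by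
    rw [← pt_sum_sq p, ← pt_sum_sq q]
    exact spatial_cs p.1 q.1
  have hm : mink d p.1 q.1 = A - p.1 (Fin.last d) * q.1 (Fin.last d) := rfl
  have hp := pt_last_ge_one p
  have hq := pt_last_ge_one q
  rw [hm]
  set B := p.1 (Fin.last d) * q.1 (Fin.last d) with hB
  have hB1 : 0 ≤ B - 1 := by nlinarith
  have h1 : A^2 ≤ (B-1)^2 := by nlinarith [sq_nonneg (p.1 (Fin.last d) - q.1 (Fin.last d))]
  have h4 : |A| ≤ B - 1 := by
    have h5 := Real.sqrt_le_sqrt h1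
    rwa [Real.sqrt_sq_eq_abs, Real.sqrt_sq hB1] at h5
  have := le_abs_self A
  linarith

lemma minkRC_eq (p q : Pt d) (h : -(mink d p.1 q.1) = 1) : p = q := by
  set A := ∑ i : Fin d, p.1 i.castSucc * q.1 i.castSucc with hA
  have hm : mink d p.1 q.1 = A - p.1 (Fin.last d) * q.1 (Fin.last d) := rfl
  have hcs : A^2 ≤ ((p.1 (Fin.last d))^2 - 1) * ((q.1 (Fin.last d))^2 - 1) := by
    rw [← pt_sum_sq p, ← pt_sum_sq q]
    exact spatial_cs p.1 q.1
  have hp := pt_last_ge_one p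
  have hq := pt_last_ge_one q
  have hAe : A = p.1 (Fin.last d) * q.1 (Fin.last d) - 1 := by rw [hm] at h; linarith
  have hlast : p.1 (Fin.last d) = q.1 (Fin.last d) := by
    have hd2 : (p.1 (Fin.last d) - q.1 (Fin.last d))^2 ≤ 0 := by nlinarith [hcs]
    have hd3 : (p.1 (Fin.last d) - q.1 (Fin.last d))^2 = 0 := le_antisymm hd2 (sq_nonneg _)
    have := sq_eq_zero_iff.1 hd3
    linarith
  have hsum : ∑ i : Fin d, (p.1 i.castSucc - q.1 i.castSucc)^2 = 0 := by
    have hexp : ∑ i : Fin d, (p.1 i.castSucc - q.1 i.castSucc)^2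
        = (∑ i : Fin d, (p.1 i.castSucc)^2) - 2*A + ∑ i : Fin d, (q.1 i.castSucc)^2 := by
      rw [hA, Finset.mul_sum, ← Finset.sum_sub_distrib, ← Finset.sum_add_distrib]
      exact Finset.sum_congr rfl fun i _ => by ring
    rw [hexp, pt_sum_sq p, pt_sum_sq q, hAe, hlast]
    ring
  have hzero : ∀ i : Fin d, (p.1 i.castSucc - q.1 i.castSucc)^2 = 0 := by
    intro i
    have := (Finset.sum_eq_zero_iff_of_nonneg (fun j _ => sq_nonneg
      (p.1 j.castSucc - q.1 j.castSucc))).1 hsum i (Finset.mem_univ i)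
    exact this
  apply Subtype.ext
  ext j
  induction j using Fin.lastCases with
  | last => exact hlast
  | cast i =>
      have := hzero i
      have h2 := sq_eq_zero_iff.1 this
      linarith
end PtLemmas

section MoreLemmas

lemma hdist_nonneg (p q : Pt d) : 0 ≤ hdist p q := arcosh_nonneg (minkRC p q)

lemma mink_lt_of_ne {p q : Pt d} (h : p ≠ q) : 1 < -(mink d p.1 q.1) := by
  rcases lt_or_eq_of_le (minkRC p q) with h1 | h1
  · exact h1
  · exact absurd (minkRC_eq p q h1.symm) h

/-- A timelike vector making negative product with an upper hyperboloid point has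
positive last coordinate. -/
lemma timelike_pos (c : Pt d) (x : EuclideanSpace ℝ (Fin (d+1)))
    (hx : mink d x x < 0) (hcx : mink d c.1 x < 0) : 0 < x (Fin.last d) := by
  set S := ∑ i : Fin d, (x i.castSucc)^2 with hS
  have hS0 : 0 ≤ S := Finset.sum_nonneg fun i _ => sq_nonneg _
  have hSx : S < (x (Fin.last d))^2 := by
    have : mink d x x = (∑ i : Fin d, x i.castSucc * x i.castSucc)
        - x (Fin.last d) * x (Fin.last d) := rfl
    have h2 : ∑ i : Fin d, x i.castSucc * x i.castSucc = S := by
      rw [hS]; exact Finset.sum_congr rfl fun i _ => by ring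
    nlinarith [hx, this, h2]
  by_contra hle
  push_neg at hle
  rcases eq_or_lt_of_le hle with heq | hlt
  · rw [heq] at hSx; simp at hSx; linarith
  set A := ∑ i : Fin d, c.1 i.castSucc * x i.castSucc with hA
  have hcs : A^2 ≤ ((c.1 (Fin.last d))^2 - 1) * S := by
    rw [← pt_sum_sq c, hS]; exact spatial_cs c.1 x
  have hc1 := pt_last_ge_one c
  have hm : mink d c.1 x = A - c.1 (Fin.last d) * x (Fin.last d) := rfl
  set ct := c.1 (Fin.last d)
  set xt := x (Fin.last d)
  have hcxneg : A < ct * xt := by rw [hm] at hcx; linarith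
  have hctxt : ct * xt < 0 := by
    have : 0 < ct := by linarith
    exact mul_neg_of_pos_of_neg this hlt
  have hprod : 0 < (ct * xt - A) * (-(A + ct * xt)) :=
    mul_pos (by linarith) (by linarith)
  have hwedge : 0 ≤ (ct^2 - 1) * (xt^2 - S) :=
    mul_nonneg (by nlinarith) (by linarith)
  nlinarith [hcs, hprod, hwedge, sq_nonneg xt, hlt, mul_pos (neg_pos.2 hlt) (neg_pos.2 hlt)]

/-- Pushing an interior point slightly across a hyperplane through it. -/
lemma push_across (c : Pt d) (u : EuclideanSpace ℝ (Fin (d+1)))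
    (huu : mink d u u = 1) (hcu : mink d c.1 u = 0) {ε : ℝ} (hε : 0 < ε) :
    ∃ c' : Pt d, hdist c c' < ε ∧ mink d u c'.1 < 0 := by
  set ct := c.1 (Fin.last d) with hct
  set ut := u (Fin.last d) with hut
  have hct0 : 0 < ct := pt_last_pos c
  set κ := ct / (|ut| + 1) with hκ
  have hden : (0:ℝ) < |ut| + 1 := by positivity
  have hκ0 : 0 < κ := div_pos hct0 hden
  set y := min (ε/2) (Real.arsinh κ / 2) with hy
  have harc : 0 < Real.arsinh κ := Real.arsinh_pos_iff.2 hκ0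
  have hy0 : 0 < y := lt_min (by linarith) (by linarith)
  have hsy : Real.sinh y < κ := by
    have h1 : y < Real.arsinh κ := lt_of_le_of_lt (min_le_right _ _) (by linarith)
    calc Real.sinh y < Real.sinh (Real.arsinh κ) := Real.sinh_lt_sinh.2 h1
      _ = κ := Real.sinh_arsinh κ
  have hsy0 : 0 < Real.sinh y := by
    rw [← Real.sinh_zero]; exact Real.sinh_lt_sinh.2 hy0
  have hcy1 : 1 ≤ Real.cosh y := Real.one_le_cosh y
  set v := Real.cosh y • c.1 - Real.sinh y • u with hv
  have hcu' : mink d u c.1 = 0 := by rw [mink_comm]; exact hcu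
  have hmvv : mink d v v = -1 := by
    rw [hv]
    simp only [mink_sub_left, mink_sub_right, mink_smul_left, mink_smul_right,
      c.2.1, huu, hcu, hcu']
    have := Real.cosh_sq y
    nlinarith [this]
  have hvt : v (Fin.last d) = Real.cosh y * ct - Real.sinh y * ut := by
    simp [hv, PiLp.sub_apply, PiLp.smul_apply, smul_eq_mul, hct, hut]
  have hκut : κ * |ut| < ct := by
    have hcancel : κ * (|ut| + 1) = ct := div_mul_cancel₀ ct (ne_of_gt hden)
    nlinarith
  have hvtpos : 0 < v (Fin.last d) := by
    rw [hvt]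
    have h1 : Real.sinh y * ut ≤ Real.sinh y * |ut| :=
      mul_le_mul_of_nonneg_left (le_abs_self ut) (le_of_lt hsy0)
    have h2 : Real.sinh y * |ut| ≤ κ * |ut| :=
      mul_le_mul_of_nonneg_right (le_of_lt hsy) (abs_nonneg ut)
    have h3 : ct ≤ Real.cosh y * ct := by nlinarith
    linarith
  refine ⟨⟨v, hmvv, hvtpos⟩, ?_, ?_⟩
  · have hmcv : mink d c.1 v = -Real.cosh y := by
      rw [hv, mink_sub_right, mink_smul_right, mink_smul_right, c.2.1, hcu]
      ring
    have : hdist c ⟨v, hmvv, hvtpos⟩ = arcosh (Real.cosh y) := by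
      unfold hdist
      rw [hmcv]; norm_num
    rw [this, arcosh_cosh (le_of_lt hy0)]
    calc y ≤ ε/2 := min_le_left _ _
      _ < ε := by linarith
  · have : mink d u v = -Real.sinh y := by
      rw [hv]
      simp only [mink_sub_right, mink_smul_right, huu, hcu']
      ring
    rw [this]
    linarith

end MoreLemmas
/-- The geodesic segment between `a` and `b`, described metrically via betweenness
(hyperbolic space is uniquely geodesic). -/
def seg (a b : Pt d) : Set (Pt d) := {p | hdist a p + hdist p b = hdist a b}

/-- A set is (geodesically) convex if it contains the segment between any two of its points. -/
def IsConvexSet (C : Set (Pt d)) : Prop := ∀ a ∈ C, ∀ b ∈ C, seg a b ⊆ C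

/-- The convex hull: the smallest convex set containing `A`. -/
def chull (A : Set (Pt d)) : Set (Pt d) := ⋂₀ {C | IsConvexSet C ∧ A ⊆ C}

/-- The totally geodesic hyperplane with (spacelike) normal vector `v`. -/
def plane (v : EuclideanSpace ℝ (Fin (d + 1))) : Set (Pt d) := {p | mink d v p.1 = 0}

/-- A hyperplane of `ℍ^d`: the trace on the hyperboloid of a linear hyperplane
with spacelike unit normal. -/
def IsHyperplane (H : Set (Pt d)) : Prop := ∃ v, mink d v v = 1 ∧ H = plane v

/-- Distance from a point to a set. -/
def distPS (p : Pt d) (S : Set (Pt d)) : ℝ := sInf (hdist p '' S)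

/-- Distance between two sets. -/
def distSS (A B : Set (Pt d)) : ℝ := sInf {r | ∃ a ∈ A, ∃ b ∈ B, hdist a b = r}

/-- `h` is the orthogonal projection of `g` onto `H`: the point of `H`
realizing the distance from `g` to `H`.  For a hyperplane `H` with `a ∈ H`,
`IsProj b H a` also expresses that `H` is orthogonal to the segment `ab` at `a`. -/
def IsProj (g : Pt d) (H : Set (Pt d)) (h : Pt d) : Prop :=
  h ∈ H ∧ ∀ k ∈ H, hdist g h ≤ hdist g k

/-- Two hyperplanes are ultraparallel if they are disjoint and not asymptotically
parallel (their distance is positive, i.e. they admit a common perpendicular). -/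
def Ultraparallel (H J : Set (Pt d)) : Prop :=
  IsHyperplane H ∧ IsHyperplane J ∧ H ∩ J = ∅ ∧ 0 < distSS H J

/-- `p` is an interior point of `C`. -/
def IsIntr (C : Set (Pt d)) (p : Pt d) : Prop := ∃ ε > 0, ∀ q, hdist p q < ε → q ∈ C

/-- `p` is a boundary point of the (closed) set `C`. -/
def IsBdry (C : Set (Pt d)) (p : Pt d) : Prop := p ∈ C ∧ ¬ IsIntr C p

/-- `C` is bounded. -/
def IsBddSet (C : Set (Pt d)) : Prop := ∃ R, ∀ a ∈ C, ∀ b ∈ C, hdist a b ≤ R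

/-- `C` is closed. -/
def IsClosedSet (C : Set (Pt d)) : Prop :=
  ∀ p : Pt d, (∀ ε > 0, ∃ q ∈ C, hdist p q < ε) → p ∈ C

/-- A convex body: a compact (closed and bounded) convex set with nonempty interior. -/
def IsBody (C : Set (Pt d)) : Prop :=
  IsConvexSet C ∧ IsBddSet C ∧ IsClosedSet C ∧ ∃ p, IsIntr C p

/-- The hyperplane `H` supports `C`: it meets `C` but misses its interior. -/
def Supports (H C : Set (Pt d)) : Prop :=
  IsHyperplane H ∧ (H ∩ C).Nonempty ∧ ∀ p, IsIntr C p → p ∉ H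

/-- The width of `C` determined by `H`, as the maximum distance from `H`
to a point of `C`. -/
def width (H C : Set (Pt d)) : ℝ := sSup ((fun c => distPS c H) '' C)

/-- The width of `C` determined by `H`, as the distance from `H` to a farthest
supporting hyperplane of `C` ultraparallel to `H`. -/
def widthUP (H C : Set (Pt d)) : ℝ :=
  sSup {r | ∃ J, Supports J C ∧ Ultraparallel H J ∧ distSS H J = r}

/-- The thickness of `C`: the minimum width over supporting hyperplanes. -/
def thickness (C : Set (Pt d)) : ℝ := sInf {r | ∃ H, Supports H C ∧ width H C = r}

/-- The diameter of `C`. -/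
def diam (C : Set (Pt d)) : ℝ := sSup {r | ∃ a ∈ C, ∃ b ∈ C, hdist a b = r}

/-- A body of constant width `δ`. -/
def ConstWidth (W : Set (Pt d)) (δ : ℝ) : Prop :=
  IsBody W ∧ ∀ H, Supports H W → width H W = δ

/-- A complete set of diameter `δ`. -/
def CompleteSet (C : Set (Pt d)) (δ : ℝ) : Prop :=
  diam C = δ ∧ ∀ x, x ∉ C → diam (C ∪ {x}) > δ

/-- A body of constant diameter `δ`. -/
def ConstDiam (C : Set (Pt d)) (δ : ℝ) : Prop :=
  diam C = δ ∧ ∀ p, IsBdry C p → ∃ p' ∈ C, hdist p p' = δ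



section Compactness

lemma euclid_norm_eq (w : EuclideanSpace ℝ (Fin (d+1))) :
    ‖w‖ = Real.sqrt (∑ j, (w j)^2) := by
  rw [EuclideanSpace.norm_eq]
  congr 1
  exact Finset.sum_congr rfl fun i _ => by rw [Real.norm_eq_abs, sq_abs]

lemma coord_le_norm (w : EuclideanSpace ℝ (Fin (d+1))) (j : Fin (d+1)) : |w j| ≤ ‖w‖ := by
  rw [euclid_norm_eq, ← Real.sqrt_sq_eq_abs]
  apply Real.sqrt_le_sqrt
  exact Finset.single_le_sum (fun i _ => sq_nonneg (w i)) (Finset.mem_univ j)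

lemma abs_mink_le (z w : EuclideanSpace ℝ (Fin (d+1))) :
    |mink d z w| ≤ (∑ j, |z j|) * ‖w‖ := by
  have h1 : |mink d z w| ≤ ∑ j, |z j| * |w j| := by
    unfold mink
    calc |(∑ i : Fin d, z i.castSucc * w i.castSucc) - z (Fin.last d) * w (Fin.last d)|
        ≤ |∑ i : Fin d, z i.castSucc * w i.castSucc| + |z (Fin.last d) * w (Fin.last d)| :=
          abs_sub _ _
      _ ≤ (∑ i : Fin d, |z i.castSucc * w i.castSucc|) + |z (Fin.last d) * w (Fin.last d)| := by
          gcongr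
          exact Finset.abs_sum_le_sum_abs _ _
      _ = ∑ j, |z j| * |w j| := by
          rw [Fin.sum_univ_castSucc (f := fun j => |z j| * |w j|)]
          congr 1
          exact Finset.sum_congr rfl fun i _ => abs_mul _ _
          exact abs_mul _ _
  calc |mink d z w| ≤ ∑ j, |z j| * |w j| := h1
    _ ≤ ∑ j, |z j| * ‖w‖ := by
        apply Finset.sum_le_sum
        intro j _
        exact mul_le_mul_of_nonneg_left (coord_le_norm w j) (abs_nonneg _)
    _ = (∑ j, |z j|) * ‖w‖ := by rw [Finset.sum_mul]

lemma cont_mink_right (v : EuclideanSpace ℝ (Fin (d+1))) :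
    Continuous (fun y : EuclideanSpace ℝ (Fin (d+1)) => mink d v y) := by
  unfold mink
  apply Continuous.sub
  · apply continuous_finset_sum
    intro i _
    exact (continuous_const.mul (PiLp.continuous_apply _ _ _))
  · exact continuous_const.mul (PiLp.continuous_apply _ _ _)

lemma cont_mink_diag :
    Continuous (fun y : EuclideanSpace ℝ (Fin (d+1)) => mink d y y) := by
  unfold mink
  apply Continuous.sub
  · apply continuous_finset_sum
    intro i _
    exact ((PiLp.continuous_apply _ _ _).mul (PiLp.continuous_apply _ _ _))
  · exact (PiLp.continuous_apply _ _ _).mul (PiLp.continuous_apply _ _ _)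

lemma arcosh_le_3sqrt {t : ℝ} (h0 : 0 ≤ t) (h1 : t ≤ 1) : arcosh (1 + t) ≤ 3 * Real.sqrt t := by
  have hst := Real.sqrt_nonneg t
  have hst1 : Real.sqrt t ≤ 1 := by
    rw [show (1:ℝ) = Real.sqrt 1 by simp]
    exact Real.sqrt_le_sqrt h1
  have htst : t ≤ Real.sqrt t := by
    nlinarith [Real.sq_sqrt h0]
  have hsq : (1+t)^2 - 1 = t^2 + 2*t := by ring
  have hb : Real.sqrt ((1+t)^2 - 1) ≤ 2 * Real.sqrt t := by
    rw [hsq]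
    have : t^2 + 2*t ≤ (2 * Real.sqrt t)^2 := by nlinarith [Real.sq_sqrt h0]
    calc Real.sqrt (t^2 + 2*t) ≤ Real.sqrt ((2*Real.sqrt t)^2) := Real.sqrt_le_sqrt this
      _ = 2 * Real.sqrt t := Real.sqrt_sq (by linarith)
  unfold arcosh
  calc Real.log (1 + t + Real.sqrt ((1+t)^2 - 1))
      ≤ Real.log (1 + 3 * Real.sqrt t) := by
        apply Real.log_le_log (by nlinarith [Real.sqrt_nonneg ((1+t)^2-1)])
        linarith
    _ ≤ 3 * Real.sqrt t := by
        have := Real.add_one_le_exp (3 * Real.sqrt t)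
        have h3 : (0:ℝ) < 1 + 3 * Real.sqrt t := by linarith
        rw [Real.log_le_iff_le_exp h3]
        linarith

/-- Extreme value theorem for our hand-rolled compactness. -/
lemma exists_max (W : Set (Pt d)) (hne : W.Nonempty) (hbd : IsBddSet W) (hcl : IsClosedSet W)
    (f : EuclideanSpace ℝ (Fin (d+1)) → ℝ) (hf : Continuous f) :
    ∃ x ∈ W, ∀ c ∈ W, f c.1 ≤ f x.1 := by
  obtain ⟨a, ha⟩ := hne
  obtain ⟨R, hR⟩ := hbd
  set S : Set (EuclideanSpace ℝ (Fin (d+1))) := Subtype.val '' W with hSdef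
  -- boundedness
  set at_ := a.1 (Fin.last d) with hat
  have hat1 : 1 ≤ at_ := pt_last_ge_one a
  have hsa : Real.sqrt (at_^2 - 1) < at_ := by
    have h1 : at_^2 - 1 < at_^2 := by linarith
    calc Real.sqrt (at_^2-1) < Real.sqrt (at_^2) :=
        Real.sqrt_lt_sqrt (by nlinarith) h1
      _ = at_ := Real.sqrt_sq (by linarith)
  have hsa0 : 0 < at_ - Real.sqrt (at_^2 - 1) := by linarith
  set M := Real.exp R / (at_ - Real.sqrt (at_^2 - 1)) with hM
  have hbound : ∀ b ∈ W, b.1 (Fin.last d) ≤ M := by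
    intro b hb
    set bt := b.1 (Fin.last d) with hbt
    have hbt1 : 1 ≤ bt := pt_last_ge_one b
    have hRb : hdist a b ≤ R := hR a ha b hb
    have hx1 : 1 ≤ -(mink d a.1 b.1) := minkRC a b
    have hxe : -(mink d a.1 b.1) ≤ Real.exp R := le_exp_of_arcosh_le hx1 hRb
    set A := ∑ i : Fin d, a.1 i.castSucc * b.1 i.castSucc with hA
    have hcs : A^2 ≤ (at_^2 - 1) * (bt^2 - 1) := by
      rw [← pt_sum_sq a, ← pt_sum_sq b]
      exact spatial_cs a.1 b.1
    have hm : mink d a.1 b.1 = A - at_ * bt := rfl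
    have hAle : A ≤ Real.sqrt (at_^2-1) * Real.sqrt (bt^2-1) := by
      have h3 : A ≤ |A| := le_abs_self _
      have h4 : |A| = Real.sqrt (A^2) := (Real.sqrt_sq_eq_abs _).symm
      have h5 : Real.sqrt (A^2) ≤ Real.sqrt ((at_^2-1)*(bt^2-1)) := Real.sqrt_le_sqrt hcs
      rw [Real.sqrt_mul (by nlinarith) _] at h5
      linarith
    have hsb : Real.sqrt (bt^2 - 1) ≤ bt := by
      calc Real.sqrt (bt^2-1) ≤ Real.sqrt (bt^2) := Real.sqrt_le_sqrt (by linarith)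
        _ = bt := Real.sqrt_sq (by linarith)
    have hkey : bt * (at_ - Real.sqrt (at_^2-1)) ≤ Real.exp R := by
      have h6 : -(mink d a.1 b.1) = at_ * bt - A := by rw [hm]; ring
      have h7 : at_ * bt - Real.sqrt (at_^2-1) * bt ≤ at_ * bt - A := by
        have := mul_le_mul_of_nonneg_left hsb (Real.sqrt_nonneg (at_^2-1))
        linarith
      nlinarith
    rw [hM]
    exact (le_div_iff₀ hsa0).2 hkey
  -- boundedness of S
  have hSbd : Bornology.IsBounded S := by
    apply isBounded_iff_forall_norm_le.2
    refine ⟨Real.sqrt (2 * (max M 1)^2), ?_⟩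
    rintro x ⟨b, hb, rfl⟩
    have h1 := hbound b hb
    have hbt1 : 1 ≤ b.1 (Fin.last d) := pt_last_ge_one b
    rw [euclid_norm_eq]
    apply Real.sqrt_le_sqrt
    rw [Fin.sum_univ_castSucc (f := fun j => (b.1 j)^2)]
    have h2 : ∑ i : Fin d, (b.1 i.castSucc)^2 = (b.1 (Fin.last d))^2 - 1 := pt_sum_sq b
    have h3 : b.1 (Fin.last d) ≤ max M 1 := le_trans h1 (le_max_left _ _)
    have h4 : (1:ℝ) ≤ max M 1 := le_max_right _ _
    nlinarith
  -- closedness of S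
  have hScl : IsClosed S := by
    apply isClosed_of_closure_subset
    intro z hz
    have hzH : mink d z z = -1 := by
      have hsub : closure S ⊆ {y | mink d y y = -1} :=
        closure_minimal (by rintro _ ⟨b, hb, rfl⟩; exact b.2.1)
          (isClosed_eq cont_mink_diag continuous_const)
      exact hsub hz
    have hz1 : 1 ≤ z (Fin.last d) := by
      have hsub : closure S ⊆ {y | 1 ≤ y (Fin.last d)} :=
        closure_minimal (by rintro _ ⟨b, hb, rfl⟩; exact pt_last_ge_one b)
          (isClosed_le continuous_const (PiLp.continuous_apply _ _ _))
      exact hsub hz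
    set zz : Pt d := ⟨z, hzH, by linarith⟩ with hzz
    have hzW : zz ∈ W := by
      apply hcl
      intro ε hε
      set K := ∑ j, |z j| with hK
      have hK0 : 0 ≤ K := Finset.sum_nonneg fun j _ => abs_nonneg _
      set ε' := min (1/(K+1)) (ε^2/(9*(K+1))) with hε'def
      have hε'0 : 0 < ε' := lt_min (by positivity) (by positivity)
      obtain ⟨y, hyS, hdy⟩ := Metric.mem_closure_iff.1 hz ε' hε'0
      rcases hyS with ⟨q, hq, rfl⟩
      refine ⟨q, hq, ?_⟩
      set t := -(mink d z q.1) - 1 with htdef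
      have ht0 : 0 ≤ t := by
        have h1 : 1 ≤ -(mink d z q.1) := minkRC zz q
        linarith
      have htK : t ≤ K * ε' := by
        have h1 : mink d z (q.1 - z) = mink d z q.1 - mink d z z := mink_sub_right _ _ _
        have h2 : t = -(mink d z (q.1 - z)) := by rw [h1, hzH]; ring
        have h3 : |mink d z (q.1 - z)| ≤ K * ‖q.1 - z‖ := abs_mink_le z _
        have h4 : ‖q.1 - z‖ = dist z q.1 := by rw [dist_eq_norm, norm_sub_rev]
        have h5 : -(mink d z (q.1 - z)) ≤ |mink d z (q.1 - z)| := neg_le_abs _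
        have h6 : K * ‖q.1 - z‖ ≤ K * ε' := by
          rw [h4]; exact mul_le_mul_of_nonneg_left (le_of_lt hdy) hK0
        linarith
      have ht1 : t ≤ 1 := by
        have h1 : ε' ≤ 1/(K+1) := min_le_left _ _
        have h2 : K * ε' ≤ K * (1/(K+1)) := mul_le_mul_of_nonneg_left h1 hK0
        have h3 : K * (1/(K+1)) ≤ 1 := by
          rw [mul_one_div, div_le_one (by linarith)]; linarith
        linarith
      have htsmall : t < ε^2/9 := by
        have h1 : ε' ≤ ε^2/(9*(K+1)) := min_le_right _ _
        have h2 : K * ε' ≤ K * (ε^2/(9*(K+1))) := mul_le_mul_of_nonneg_left h1 hK0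
        have h3 : K * (ε^2/(9*(K+1))) < ε^2/9 := by
          rw [mul_div_assoc']
          rw [div_lt_div_iff₀ (by positivity) (by norm_num)]
          nlinarith [pow_pos hε 2]
        linarith
      have hsqr : Real.sqrt t < ε/3 := by
        have hε3 : (0:ℝ) < ε/3 := by linarith
        rw [show ε/3 = Real.sqrt ((ε/3)^2) from (Real.sqrt_sq (le_of_lt hε3)).symm]
        exact Real.sqrt_lt_sqrt ht0 (by nlinarith)
      have harg : -(mink d z q.1) = 1 + t := by rw [htdef]; ring
      have : hdist zz q = arcosh (1 + t) := by unfold hdist; rw [← harg]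
      rw [this]
      have := arcosh_le_3sqrt ht0 ht1
      linarith
    exact ⟨zz, hzW, rfl⟩
  have hScomp : IsCompact S := Metric.isCompact_of_isClosed_isBounded hScl hSbd
  have hSne : S.Nonempty := ⟨a.1, a, ha, rfl⟩
  obtain ⟨y, hyS, hymax⟩ := hScomp.exists_isMaxOn hSne hf.continuousOn
  rcases hyS with ⟨x, hx, rfl⟩
  exact ⟨x, hx, fun c hc => hymax ⟨c, hc, rfl⟩⟩

end Compactness

section PlaneDist

/-- The distance from a point to a hyperplane is realized and equals
`arcosh √(1 + (mink v x)²)`. -/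
lemma isLeast_dist_plane (v : EuclideanSpace ℝ (Fin (d+1))) (hv : mink d v v = 1) (x : Pt d) :
    IsLeast (hdist x '' plane v) (arcosh (Real.sqrt (1 + (mink d v x.1)^2))) := by
  set α := mink d v x.1 with hα
  set β := Real.sqrt (1 + α^2) with hβ
  have hβ2 : β^2 = 1 + α^2 := Real.sq_sqrt (by positivity)
  have hβ1 : 1 ≤ β := by
    nlinarith [Real.sqrt_nonneg (1 + α^2), hβ2, sq_nonneg α]
  have hβ0 : 0 < β := by linarith
  set w := x.1 - α • v with hw
  have hxv : mink d x.1 v = α := by rw [mink_comm]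
  have hww : mink d w w = -(1 + α^2) := by
    rw [hw]
    simp only [mink_sub_left, mink_sub_right, mink_smul_left, mink_smul_right,
      x.2.1, hv, hxv]
    rw [show mink d v x.1 = α from hα.symm]
    ring
  have hxw : mink d x.1 w = -(1 + α^2) := by
    rw [hw]
    simp only [mink_sub_right, mink_smul_right, x.2.1, hxv]
    ring
  have hwt : 0 < w (Fin.last d) := by
    apply timelike_pos x w
    · rw [hww]; nlinarith
    · rw [hxw]; nlinarith
  have hk0pt : mink d (β⁻¹ • w) (β⁻¹ • w) = -1 := by
    rw [mink_smul_left, mink_smul_right, hww]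
    field_simp
    nlinarith [hβ2]
  have hk0t : 0 < (β⁻¹ • w) (Fin.last d) := by
    have : (β⁻¹ • w) (Fin.last d) = β⁻¹ * w (Fin.last d) := by
      simp [PiLp.smul_apply, smul_eq_mul]
    rw [this]
    positivity
  set k₀ : Pt d := ⟨β⁻¹ • w, hk0pt, hk0t⟩ with hk₀
  have hk₀mem : k₀ ∈ plane v := by
    show mink d v (β⁻¹ • w) = 0
    rw [mink_smul_right, hw, mink_sub_right, mink_smul_right, hv, hα.symm]
    ring
  have hwdec : x.1 = β • k₀.1 + α • v := by
    show x.1 = β • (β⁻¹ • w) + α • v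
    rw [smul_smul, mul_inv_cancel₀ (ne_of_gt hβ0), one_smul, hw]
    abel
  have hxk₀ : mink d x.1 k₀.1 = -β := by
    show mink d x.1 (β⁻¹ • w) = -β
    rw [mink_smul_right, hxw]
    rw [show -(1+α^2) = -β^2 by rw [hβ2]]
    field_simp
  constructor
  · refine ⟨k₀, hk₀mem, ?_⟩
    unfold hdist
    rw [hxk₀]
    norm_num
  · rintro _ ⟨k, hk, rfl⟩
    have hvk : mink d v k.1 = 0 := hk
    have h1 : mink d x.1 k.1 = β * mink d k₀.1 k.1 := by
      rw [hwdec, mink_add_left, mink_smul_left β k₀.1 k.1, mink_smul_left α v k.1, hvk]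
      ring
    have h2 : 1 ≤ -(mink d k₀.1 k.1) := minkRC k₀ k
    have h3 : β ≤ -(mink d x.1 k.1) := by rw [h1]; nlinarith
    exact arcosh_le_arcosh hβ1 h3

lemma distPS_plane (v : EuclideanSpace ℝ (Fin (d+1))) (hv : mink d v v = 1) (x : Pt d) :
    distPS x (plane v) = arcosh (Real.sqrt (1 + (mink d v x.1)^2)) :=
  (isLeast_dist_plane v hv x).csInf_eq

end PlaneDist

section StepA

/-- In a body of constant width `δ`, any two points are at distance at most `δ`. -/
lemma dist_le_delta (W : Set (Pt d)) (δ : ℝ) (hW : ConstWidth W δ) (hδ : 0 ≤ δ) :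
    ∀ a ∈ W, ∀ c ∈ W, hdist a c ≤ δ := by
  obtain ⟨⟨hconv, hbd, hcl, hint⟩, hwidth⟩ := hW
  intro a ha c hc
  obtain ⟨b, hb, hmax⟩ := exists_max W ⟨a, ha⟩ hbd hcl
    (fun y => -(mink d a.1 y)) (cont_mink_right a.1).neg
  set t := -(mink d a.1 b.1) with ht
  have ht1 : 1 ≤ t := minkRC a b
  have hmax' : ∀ e ∈ W, -(mink d a.1 e.1) ≤ t := fun e he => hmax e he
  rcases eq_or_lt_of_le ht1 with h1 | h1
  · -- degenerate: W is a single point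
    have h3 : -(mink d a.1 c.1) = 1 := le_antisymm (by
      have := hmax' c hc; linarith) (minkRC a c)
    unfold hdist
    rw [h3, arcosh_one]
    exact hδ
  · -- main case
    set s := Real.sqrt (t^2 - 1) with hs
    have hs2 : s^2 = t^2-1 := Real.sq_sqrt (by nlinarith)
    have hs0 : 0 < s := Real.sqrt_pos.2 (by nlinarith)
    set u := s⁻¹ • (a.1 - t • b.1) with hu
    have hmab : mink d a.1 b.1 = -t := by rw [ht]; ring
    have hmba : mink d b.1 a.1 = -t := by rw [mink_comm]; exact hmab
    have hadec : a.1 = s • u + t • b.1 := by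
      rw [hu, smul_smul, mul_inv_cancel₀ (ne_of_gt hs0), one_smul, sub_add_cancel]
    have huu : mink d u u = 1 := by
      rw [hu]
      simp only [mink_smul_left, mink_smul_right, mink_sub_left, mink_sub_right,
        a.2.1, b.2.1, hmab, hmba]
      field_simp
      nlinarith [hs2]
    have hub : mink d u b.1 = 0 := by
      rw [hu, mink_smul_left, mink_sub_left, mink_smul_left, hmab, b.2.1]
      ring
    have hWside : ∀ e ∈ W, 0 ≤ mink d u e.1 := by
      intro e he
      rw [hu, mink_smul_left, mink_sub_left, mink_smul_left]
      have h2 : -(mink d a.1 e.1) ≤ t := hmax' e he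
      have h3 : 1 ≤ -(mink d b.1 e.1) := minkRC b e
      have h4 : 0 ≤ mink d a.1 e.1 - t * mink d b.1 e.1 := by nlinarith
      have h5 : (0:ℝ) ≤ s⁻¹ := inv_nonneg.2 (le_of_lt hs0)
      exact mul_nonneg h5 h4
    have hsupp : Supports (plane u) W := by
      refine ⟨⟨u, huu, rfl⟩, ⟨b, hub, hb⟩, ?_⟩
      intro p hp hpH
      obtain ⟨ε, hε, hball⟩ := hp
      have hpu : mink d p.1 u = 0 := by rw [mink_comm]; exact hpH
      obtain ⟨p', hp'd, hp'u⟩ := push_across p u huu hpu hε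
      have h6 : p' ∈ W := hball p' hp'd
      have h7 := hWside p' h6
      linarith
    have hδw : width (plane u) W = δ := hwidth _ hsupp
    have hlow : ∀ r ∈ hdist a '' plane u, arcosh t ≤ r := by
      rintro _ ⟨k, hk, rfl⟩
      have hk0 : mink d u k.1 = 0 := hk
      have h8 : mink d a.1 k.1 = t * mink d b.1 k.1 := by
        rw [hadec, mink_add_left, mink_smul_left s u k.1, mink_smul_left t b.1 k.1, hk0]
        ring
      have h9 : 1 ≤ -(mink d b.1 k.1) := minkRC b k
      have h10 : t ≤ -(mink d a.1 k.1) := by rw [h8]; nlinarith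
      exact arcosh_le_arcosh ht1 h10
    have hdistlow : arcosh t ≤ distPS a (plane u) :=
      le_csInf ⟨hdist a b, ⟨b, hub, rfl⟩⟩ hlow
    obtain ⟨R, hR⟩ := hbd
    have hbdd : BddAbove ((fun e => distPS e (plane u)) '' W) := by
      refine ⟨R, ?_⟩
      rintro _ ⟨e, he, rfl⟩
      have h11 : distPS e (plane u) ≤ hdist e b :=
        csInf_le ⟨0, by rintro _ ⟨k, hk, rfl⟩; exact hdist_nonneg e k⟩ ⟨b, hub, rfl⟩
      exact h11.trans (hR e he b hb)
    have h12 : distPS a (plane u) ≤ width (plane u) W := le_csSup hbdd ⟨a, ha, rfl⟩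
    have h13 : hdist a c ≤ arcosh t := arcosh_le_arcosh (minkRC a c) (hmax' c hc)
    linarith
end StepA

lemma one_le_sqrt_one_add (α : ℝ) : 1 ≤ Real.sqrt (1 + α^2) := by
  nlinarith [Real.sqrt_nonneg (1 + α^2), Real.sq_sqrt (show (0:ℝ) ≤ 1 + α^2 by positivity),
    sq_nonneg α]

/-- Proposition 3: every body of constant width is strictly
convex: each supporting hyperplane meets it in exactly one point. -/
theorem constWidth_strictly_convex {d : ℕ} (W : Set (Pt d)) (δ : ℝ)
    (hW : ConstWidth W δ) :
    ∀ H, Supports H W → ∃ p, H ∩ W = {p} := by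
  intro H hsupp
  obtain ⟨v, hv, hHplane⟩ := hsupp.1
  subst hHplane
  obtain ⟨hconv, hbd, hcl, hint⟩ := hW.1
  have hδw : width (plane v) W = δ := hW.2 _ hsupp
  obtain ⟨h0, hh0⟩ := hsupp.2.1
  have hh0H : mink d v h0.1 = 0 := hh0.1
  have hh0W : h0 ∈ W := hh0.2
  obtain ⟨R, hR⟩ := hbd
  have hbdd : BddAbove ((fun e => distPS e (plane v)) '' W) := by
    refine ⟨R, ?_⟩
    rintro _ ⟨e, he, rfl⟩
    have h11 : distPS e (plane v) ≤ hdist e h0 :=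
      csInf_le ⟨0, by rintro _ ⟨k, hk, rfl⟩; exact hdist_nonneg e k⟩ ⟨h0, hh0H, rfl⟩
    exact h11.trans (hR e he h0 hh0W)
  have hδ0 : 0 ≤ δ := by
    have h1 : distPS h0 (plane v) ≤ width (plane v) W := le_csSup hbdd ⟨h0, hh0W, rfl⟩
    have h2 : 0 ≤ distPS h0 (plane v) := by
      rw [distPS_plane v hv h0]
      exact arcosh_nonneg (one_le_sqrt_one_add _)
    linarith
  -- the farthest point from the hyperplane
  obtain ⟨x, hx, hmax⟩ := exists_max W ⟨h0, hh0W⟩ ⟨R, hR⟩ hcl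
    (fun y => (mink d v y)^2) ((cont_mink_right v).pow 2)
  have hIG : IsGreatest ((fun e => distPS e (plane v)) '' W) (distPS x (plane v)) := by
    constructor
    · exact ⟨x, hx, rfl⟩
    · rintro _ ⟨e, he, rfl⟩
      dsimp only
      rw [distPS_plane v hv e, distPS_plane v hv x]
      apply arcosh_le_arcosh (one_le_sqrt_one_add _)
      apply Real.sqrt_le_sqrt
      have := hmax e he
      linarith
  have hδx : distPS x (plane v) = δ := by rw [← hδw]; exact hIG.csSup_eq.symm
  -- uniqueness of the contact point
  have key : ∀ p ∈ plane v ∩ W, ∀ q ∈ plane v ∩ W, p = q := by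
    intro p hp q hq
    by_contra hne
    have hpH : mink d v p.1 = 0 := hp.1
    have hqH : mink d v q.1 = 0 := hq.1
    have hdp : hdist x p = δ := by
      have h1 : δ ≤ hdist x p := by
        rw [← hδx]
        exact csInf_le ⟨0, by rintro _ ⟨k, hk, rfl⟩; exact hdist_nonneg x k⟩ ⟨p, hp.1, rfl⟩
      have h2 : hdist x p ≤ δ := dist_le_delta W δ hW hδ0 x hx p hp.2
      linarith
    have hdq : hdist x q = δ := by
      have h1 : δ ≤ hdist x q := by
        rw [← hδx]
        exact csInf_le ⟨0, by rintro _ ⟨k, hk, rfl⟩; exact hdist_nonneg x k⟩ ⟨q, hq.1, rfl⟩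
      have h2 : hdist x q ≤ δ := dist_le_delta W δ hW hδ0 x hx q hq.2
      linarith
    set T := -(mink d x.1 p.1) with hT
    have hT1 : 1 ≤ T := minkRC x p
    have hTq : -(mink d x.1 q.1) = T := by
      apply eq_of_arcosh_eq_arcosh (minkRC x q) hT1
      have e1 : arcosh (-(mink d x.1 q.1)) = hdist x q := rfl
      have e2 : arcosh T = hdist x p := rfl
      rw [e1, e2, hdp, hdq]
    set C := -(mink d p.1 q.1) with hC
    have hC1 : 1 < C := mink_lt_of_ne hne
    set N := Real.sqrt (2*C+2) with hN
    have hN2 : N^2 = 2*C+2 := Real.sq_sqrt (by linarith)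
    have hN0 : 0 < N := Real.sqrt_pos.2 (by linarith)
    have hN2' : 2 < N := by nlinarith
    have hmpq : mink d p.1 q.1 = -C := by rw [hC]; ring
    have hmqp : mink d q.1 p.1 = -C := by rw [mink_comm]; exact hmpq
    have hmm : mink d (N⁻¹ • (p.1 + q.1)) (N⁻¹ • (p.1 + q.1)) = -1 := by
      rw [mink_smul_left, mink_smul_right, mink_add_left, mink_add_right, mink_add_right,
        p.2.1, q.2.1, hmpq, hmqp]
      have : (-1 : ℝ) + -C + (-C + -1) = -(N^2) := by rw [hN2]; ring
      rw [this]
      field_simp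
    have hmt : 0 < (N⁻¹ • (p.1 + q.1)) (Fin.last d) := by
      have h3 : (N⁻¹ • (p.1 + q.1)) (Fin.last d)
          = N⁻¹ * (p.1 (Fin.last d) + q.1 (Fin.last d)) := by
        simp [PiLp.smul_apply, PiLp.add_apply, smul_eq_mul]; ring
      rw [h3]
      have := pt_last_pos p
      have := pt_last_pos q
      positivity
    set m : Pt d := ⟨N⁻¹ • (p.1 + q.1), hmm, hmt⟩ with hm
    have hmH : mink d v m.1 = 0 := by
      show mink d v (N⁻¹ • (p.1 + q.1)) = 0
      rw [mink_smul_right, mink_add_right, hpH, hqH]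
      ring
    have hxm : -(mink d x.1 m.1) = 2*T/N := by
      show -(mink d x.1 (N⁻¹ • (p.1 + q.1))) = 2*T/N
      rw [mink_smul_right, mink_add_right]
      have h4 : mink d x.1 p.1 = -T := by rw [hT]; ring
      have h5 : mink d x.1 q.1 = -T := by rw [← hTq]; ring
      rw [h4, h5]
      field_simp
      ring
    have hle : δ ≤ hdist x m := by
      rw [← hδx]
      exact csInf_le ⟨0, by rintro _ ⟨k, hk, rfl⟩; exact hdist_nonneg x k⟩ ⟨m, hmH, rfl⟩
    have h1m : 1 ≤ -(mink d x.1 m.1) := minkRC x m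
    have h6 : arcosh T ≤ arcosh (-(mink d x.1 m.1)) := by
      have e2 : arcosh T = hdist x p := rfl
      have e3 : hdist x m = arcosh (-(mink d x.1 m.1)) := rfl
      rw [e2, hdp, ← e3]
      exact hle
    have h7 : T ≤ -(mink d x.1 m.1) := le_of_arcosh_le_arcosh hT1 h1m h6
    rw [hxm] at h7
    have h8 : 2*T/N < T := by
      rw [div_lt_iff₀ hN0]
      nlinarith
    linarith
  refine ⟨h0, ?_⟩
  apply Set.eq_singleton_iff_unique_mem.2
  exact ⟨hh0, fun z hz => key z hz h0 hh0⟩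

end HypSpace
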